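/- arXiv:1904.02787 — 4 statements merged into one kernel-verified Lean document; each statement's English description precedes it below -/
import Mathlib

section
/- For every natural number n ≥ 1, 2·o_n − 5·o_{n+1} + 4·o_{n+2} − o_{n+3} = 4n; consequently every integer divisible by 4 can be written as an integer linear combination of exactly four octahedral numbers. -/
/-- Octahedral numbers: oₙ = n(2n²+1)/3. -/
def oct (n : ℕ) : ℤ := (n : ℤ) * (2 * n ^ 2 + 1) / 3

lemma three_dvd_oct_num (n : ℕ) : (3 : ℤ) ∣ (n : ℤ) * (2 * (n : ℤ) ^ 2 + 1) := by
  have h : n % 3 = 0 ∨ n % 3 = 1 ∨ n % 3 = 2 := by omega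
  obtain ⟨k, hk⟩ : ∃ k, n = 3 * k + n % 3 := ⟨n / 3, by omega⟩
  rcases h with h | h | h <;> rw [h] at hk <;> subst hk <;> push_cast <;>
    [exact ⟨k * (2 * (3*k)^2 + 1), by ring⟩;
     exact ⟨(3*k+1) * (6*k^2 + 4*k + 1), by ring⟩;
     exact ⟨(3*k+2) * (6*k^2 + 8*k + 3), by ring⟩]

lemma three_mul_oct (n : ℕ) : 3 * oct n = (n : ℤ) * (2 * (n : ℤ) ^ 2 + 1) := by
  rw [oct, Int.mul_ediv_cancel' (three_dvd_oct_num n)]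

/-- 2·oₙ − 5·oₙ₊₁ + 4·oₙ₊₂ − oₙ₊₃ = 4n for all n ≥ 1; consequently every integer
divisible by 4 is an integer combination of exactly four octahedral numbers. -/
theorem octahedral_combination :
    (∀ n : ℕ, 1 ≤ n →
      2 * oct n - 5 * oct (n + 1) + 4 * oct (n + 2) - oct (n + 3) = 4 * (n : ℤ)) ∧
    (∀ m : ℤ, 4 ∣ m → ∃ n : ℕ, 1 ≤ n ∧ ∃ a₁ a₂ a₃ a₄ : ℤ,
      m = a₁ * oct n + a₂ * oct (n + 1) + a₃ * oct (n + 2) + a₄ * oct (n + 3)) := by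
  have key : ∀ n : ℕ, 2 * oct n - 5 * oct (n + 1) + 4 * oct (n + 2) - oct (n + 3)
      = 4 * (n : ℤ) := by
    intro n
    have h : (3:ℤ) * (2 * oct n - 5 * oct (n + 1) + 4 * oct (n + 2) - oct (n + 3))
        = 3 * (4 * (n : ℤ)) := by
      have h0 := three_mul_oct n
      have h1 := three_mul_oct (n + 1)
      have h2 := three_mul_oct (n + 2)
      have h3 := three_mul_oct (n + 3)
      push_cast at h1 h2 h3 ⊢
      linear_combination 2 * h0 - 5 * h1 + 4 * h2 - h3
    exact mul_left_cancel₀ (by norm_num) h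
  refine ⟨fun n _ => key n, fun m ⟨k, hk⟩ => ?_⟩
  refine ⟨1, le_refl 1, 2 * k, -5 * k, 4 * k, -k, ?_⟩
  have := key 1
  simp only [Nat.cast_one] at this
  subst hk
  linear_combination -k * this
end

section
/- For every natural number n ≥ 1, 5·i_n − 12·i_{n+1} + 9·i_{n+2} − 2·i_{n+3} = 45n; consequently every integer divisible by 45 can be written as an integer linear combination of exactly four icosahedral numbers. -/
/-- Icosahedral numbers: iₙ = n(5n²−5n+2)/2. -/
def icos (n : ℕ) : ℤ := (n : ℤ) * (5 * n ^ 2 - 5 * n + 2) / 2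

lemma icos_two_mul (n : ℕ) : 2 * icos n = (n : ℤ) * (5 * n ^ 2 - 5 * n + 2) := by
  unfold icos
  rw [mul_comm, Int.ediv_mul_cancel]
  rcases Nat.even_or_odd n with ⟨k, hk⟩ | ⟨k, hk⟩ <;> subst hk <;> push_cast <;>
    [exact ⟨k * (5*(k+k)^2 - 5*(k+k) + 2), by ring⟩;
     exact ⟨(2*k+1) * (10*k^2 + 5*k + 1), by ring⟩]

/-- 5·iₙ − 12·iₙ₊₁ + 9·iₙ₊₂ − 2·iₙ₊₃ = 45n for all n ≥ 1; consequently every integer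
divisible by 45 is an integer combination of exactly four icosahedral numbers. -/
theorem icosahedral_combination :
    (∀ n : ℕ, 1 ≤ n →
      5 * icos n - 12 * icos (n + 1) + 9 * icos (n + 2) - 2 * icos (n + 3) = 45 * (n : ℤ)) ∧
    (∀ m : ℤ, 45 ∣ m → ∃ n : ℕ, 1 ≤ n ∧ ∃ a₁ a₂ a₃ a₄ : ℤ,
      m = a₁ * icos n + a₂ * icos (n + 1) + a₃ * icos (n + 2) + a₄ * icos (n + 3)) := by
  have key : ∀ n : ℕ,
      5 * icos n - 12 * icos (n + 1) + 9 * icos (n + 2) - 2 * icos (n + 3) = 45 * (n : ℤ) := by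
    intro n
    have h0 := icos_two_mul n
    have h1 := icos_two_mul (n + 1)
    have h2 := icos_two_mul (n + 2)
    have h3 := icos_two_mul (n + 3)
    push_cast at h1 h2 h3
    linarith [sq_nonneg ((n:ℤ))]
  constructor
  · exact fun n _ => key n
  · rintro m ⟨k, rfl⟩
    refine ⟨1, le_refl 1, 5 * k, -12 * k, 9 * k, -2 * k, ?_⟩
    have h1 : icos 1 = 1 := by norm_num [icos]
    have h2 : icos (1 + 1) = 12 := by norm_num [icos]
    have h3 : icos (1 + 2) = 48 := by norm_num [icos]
    have h4 : icos (1 + 3) = 124 := by norm_num [icos]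
    rw [h1, h2, h3, h4]; ring
end

section
/- Let d > 1 be an even integer not divisible by 3. Then for every natural number n ≥ 1, d divides t_{n+2d} − t_n; that is, the sequence of tetrahedral numbers is periodic modulo d with the period dividing 2d. -/
/-- Tetrahedral numbers: tₙ = n(n+1)(n+2)/6. -/
def tet (n : ℕ) : ℤ := (n : ℤ) * (n + 1) * (n + 2) / 6

lemma six_dvd_tri (m : ℕ) : (6 : ℤ) ∣ (m : ℤ) * (m + 1) * (m + 2) := by
  induction m with
  | zero => simp
  | succ k ih =>
    have h2 : (2 : ℤ) ∣ ((k : ℤ) + 1) * ((k : ℤ) + 2) := by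
      rcases Int.even_or_odd (k : ℤ) with ⟨t, ht⟩ | ⟨t, ht⟩
      · exact ⟨(2 * t + 1) * (t + 1), by rw [ht]; ring⟩
      · exact ⟨(t + 1) * (2 * t + 3), by rw [ht]; ring⟩
    obtain ⟨a, ha⟩ := ih
    obtain ⟨b, hb⟩ := h2
    refine ⟨a + b, ?_⟩
    push_cast
    linear_combination ha + 3 * hb

/-- If d > 1 is even and not divisible by 3, then d divides tₙ₊₂d − tₙ for all n ≥ 1. -/
theorem tetrahedral_period_even_not_three (d : ℕ) (hd : 1 < d) (heven : Even d)
    (h3 : ¬ (3 ∣ d)) (n : ℕ) (hn : 1 ≤ n) :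
    (d : ℤ) ∣ tet (n + 2 * d) - tet n := by
  obtain ⟨a, ha⟩ := six_dvd_tri n
  obtain ⟨b, hb⟩ := six_dvd_tri (n + 2 * d)
  have hta : tet n = a := by
    unfold tet; rw [ha]; exact Int.mul_ediv_cancel_left _ (by norm_num)
  have htb : tet (n + 2 * d) = b := by
    unfold tet; rw [hb]; exact Int.mul_ediv_cancel_left _ (by norm_num)
  -- 3 ∣ d² - 1
  have hmod : d % 3 = 1 ∨ d % 3 = 2 := by omega
  have hc : ∃ c : ℤ, (d : ℤ) ^ 2 - 1 = 3 * c := by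
    rcases hmod with h | h
    · obtain ⟨k, hk⟩ : ∃ k, d = 3 * k + 1 := ⟨d / 3, by omega⟩
      exact ⟨3 * k ^ 2 + 2 * k, by rw [hk]; push_cast; ring⟩
    · obtain ⟨k, hk⟩ : ∃ k, d = 3 * k + 2 := ⟨d / 3, by omega⟩
      exact ⟨3 * k ^ 2 + 4 * k + 1, by rw [hk]; push_cast; ring⟩
  obtain ⟨c, hc⟩ := hc
  refine ⟨(n : ℤ) ^ 2 + 2 * n * d + 2 * n + 2 * d + d ^ 2 + 1 + c, ?_⟩
  have key : 6 * (b - a) = 6 * ((d : ℤ) * ((n : ℤ) ^ 2 + 2 * n * d + 2 * n + 2 * d + d ^ 2 + 1 + c)) := by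
    have hb' : ((n : ℤ) + 2 * d) * ((n : ℤ) + 2 * d + 1) * ((n : ℤ) + 2 * d + 2) = 6 * b := by
      push_cast at hb; linarith [hb]
    linear_combination ha - hb' + 2*(d:ℤ)*hc
  rw [htb, hta]
  exact mul_left_cancel₀ (by norm_num : (6 : ℤ) ≠ 0) key
end

section
/- Let d > 1 be an odd integer divisible by 3. Then for every natural number n ≥ 1, d divides t_{n+3d} − t_n; that is, the sequence of tetrahedral numbers is periodic modulo d with the period dividing 3d. -/
lemma six_dvd_three_consec (m : ℕ) : (6:ℤ) ∣ (m:ℤ) * (m + 1) * (m + 2) := by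
  induction m with
  | zero => simp
  | succ k ih =>
    obtain ⟨b, hb⟩ := ih
    obtain ⟨a, ha⟩ := (Int.even_mul_succ_self ((k:ℤ)+1))
    refine ⟨b + a, ?_⟩
    push_cast
    have : ((k:ℤ)+1) * ((k:ℤ)+1+1) * ((k:ℤ)+1+2)
        = (k:ℤ) * (k+1) * (k+2) + 3 * (((k:ℤ)+1) * ((k:ℤ)+1+1)) := by ring
    rw [this, hb, ha]; ring

lemma tet_mul_six (m : ℕ) : tet m * 6 = (m:ℤ) * (m + 1) * (m + 2) := by
  unfold tet
  exact Int.ediv_mul_cancel (six_dvd_three_consec m)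

/-- If d > 1 is odd and divisible by 3, then d divides tₙ₊₃d − tₙ for all n ≥ 1. -/
theorem tetrahedral_period_odd_three (d : ℕ) (hd : 1 < d) (hodd : Odd d)
    (h3 : 3 ∣ d) (n : ℕ) (hn : 1 ≤ n) :
    (d : ℤ) ∣ tet (n + 3 * d) - tet n := by
  obtain ⟨c, hc⟩ := hodd
  -- M = 3n² + 9nd + 9d² + 6n + 9d + 2 is even
  have h1 : Even ((n:ℤ) * (n + 3 * d)) := by
    rcases Nat.even_or_odd n with he | ho
    · exact (Int.even_coe_nat n |>.mpr he).mul_right _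
    · have : Even ((n:ℤ) + 3 * d) := by
        have hn' : Odd (n:ℤ) := by exact_mod_cast ho
        obtain ⟨x, hx⟩ := hn'
        exact ⟨x + 3 * c + 2, by rw [hx]; push_cast [hc]; ring⟩
      exact this.mul_left _
  have h2 : Even ((d:ℤ) * (d + 1)) := Int.even_mul_succ_self _
  have hM : Even (3 * ((n:ℤ) * (n + 3 * d)) + 6 * n + 9 * ((d:ℤ) * (d + 1)) + 2) := by
    rcases h1 with ⟨x, hx⟩; rcases h2 with ⟨y, hy⟩
    exact ⟨3 * x + 3 * n + 9 * y + 1, by rw [hx, hy]; ring⟩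
  obtain ⟨M', hM'⟩ := hM
  refine ⟨M', ?_⟩
  have key : (tet (n + 3 * d) - tet n) * 6 = ((d:ℤ) * M') * 6 := by
    rw [sub_mul, tet_mul_six, tet_mul_six]
    have : ((d:ℤ) * M') * 6 = (d:ℤ) * 3 * (M' + M') := by ring
    rw [this, ← hM']
    push_cast
    ring
  exact mul_right_cancel₀ (by norm_num) key
end
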